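/- Let n ≥ 3, c_1 ≥ … ≥ c_n > 0, let M ∈ {2,…,n−2} be maximal with Σ_{i=1}^M 1/c_i ≥ (M−2)/c_n. Define the Hider distribution p_j = 1/2 − c_n/(2c_j) for j ≤ M and p_{M+1} = 1 − Σ_{j≤M} p_j. Then p is a valid probability distribution, and against any pure Searcher strategy k ∈ [n], the expected payoff Σ_{j≠k} p_j(c_j + c_k) is at least V₂ = −(M−2)(c_n + c_{M+1})/2 + (1/2)Σ_{i=1}^M (c_i + c_{M+1}c_n/c_i), with equality when k ∈ {1,…,M} ∪ {n}. -/

import Mathlib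

open Finset

theorem stmt_18 (n M : ℕ) (c : ℕ → ℝ) (hn : 3 ≤ n)
    (hpos : ∀ i < n, 0 < c i)
    (hsort : ∀ i j, i ≤ j → j < n → c j ≤ c i)
    (hM2 : 2 ≤ M) (hMn : M ≤ n - 2)
    -- M satisfies the threshold condition
    (hcond : ((M:ℝ) - 2) / c (n-1) ≤ ∑ i ∈ Finset.range M, 1 / c i)
    -- and is maximal in {2,…,n-1} with this property
    (hmax : ∀ M', 2 ≤ M' → M' ≤ n - 1 →
      ((M':ℝ) - 2) / c (n-1) ≤ (∑ i ∈ Finset.range M', 1 / c i) → M' ≤ M) :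
    -- Hider distribution: p j on location j (0-indexed; location M is the (M+1)-st)
    let p : ℕ → ℝ := fun j =>
      if j < M then 1/2 - c (n-1) / (2 * c j)
      else if j = M then 1 - ∑ i ∈ Finset.range M, (1/2 - c (n-1) / (2 * c i))
      else 0
    let V₂ : ℝ := -((M:ℝ) - 2) * (c (n-1) + c M) / 2
      + (1/2) * ∑ i ∈ Finset.range M, (c i + c M * c (n-1) / c i)
    -- valid probability distribution
    (∀ j < n, 0 ≤ p j) ∧ (∑ j ∈ Finset.range n, p j = 1) ∧
    -- guarantee against every pure Searcher strategy k
    (∀ k < n, V₂ ≤ ∑ j ∈ (Finset.range n).erase k, p j * (c j + c k)) ∧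
    -- with equality when k ∈ {1,…,M} ∪ {n} (0-indexed: k < M or k = n-1)
    (∀ k < n, (k < M ∨ k = n - 1) →
      ∑ j ∈ (Finset.range n).erase k, p j * (c j + c k) = V₂) := by
  intro p V₂
  have hn1 : n - 1 < n := by omega
  set a := c (n - 1) with ha
  have hapos : 0 < a := hpos _ hn1
  have hMn1 : M < n - 1 := by omega
  have hci : ∀ i ≤ n - 1, 0 < c i ∧ a ≤ c i := fun i hi =>
    ⟨hpos i (by omega), hsort i (n - 1) hi hn1⟩
  have hplt : ∀ j < M, p j = 1/2 - a / (2 * c j) := by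
    intro j hj; simp only [p, if_pos hj]; rfl
  have hpMdef : p M = 1 - ∑ i ∈ Finset.range M, (1/2 - a / (2 * c i)) := by
    simp only [p, lt_irrefl, if_false, if_pos]; rfl
  have hpgt : ∀ j, M < j → p j = 0 := by
    intro j hj
    simp only [p]; rw [if_neg (by omega), if_neg (by omega)]
  -- notation for sums
  set S1 := ∑ i ∈ Finset.range M, c i with hS1
  set S2 := ∑ i ∈ Finset.range M, 1 / c i with hS2
  set b := c M with hb
  have hbpos : 0 < b := (hci M (by omega)).1
  have hab : a ≤ b := (hci M (by omega)).2
  have hsplit : ∑ i ∈ Finset.range M, (1/2 - a / (2 * c i)) = (M:ℝ)/2 - a/2 * S2 := by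
    rw [Finset.sum_sub_distrib, Finset.sum_const, card_range, hS2, Finset.mul_sum]
    have : ∀ i ∈ Finset.range M, a / (2 * c i) = a/2 * (1 / c i) := by
      intro i _; ring
    rw [Finset.sum_congr rfl this]
    simp [nsmul_eq_mul]; ring
  have hpM : p M = 1 - ((M:ℝ)/2 - a/2 * S2) := by rw [hpMdef, hsplit]
  -- nonnegativity
  have hnn : ∀ j < n, 0 ≤ p j := by
    intro j hj
    rcases lt_trichotomy j M with h | h | h
    · rw [hplt j h]
      obtain ⟨hcj, hacj⟩ := hci j (by omega)
      have : a / (2 * c j) ≤ 1/2 := by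
        rw [div_le_div_iff₀ (by positivity) (by norm_num)]
        linarith
      linarith
    · rw [h, hpM]
      have h2 : (M:ℝ) - 2 ≤ S2 * a := (div_le_iff₀ hapos).1 hcond
      linarith
    · rw [hpgt j h]
  -- sum is 1
  have hrangesub : Finset.range (M+1) ⊆ Finset.range n := by
    apply Finset.range_subset_range.2; omega
  have hrestrict : ∀ f : ℕ → ℝ, (∀ j ∈ Finset.range n, j ∉ Finset.range (M+1) → p j * f j = 0) →
      ∑ j ∈ Finset.range n, p j * f j = ∑ j ∈ Finset.range (M+1), p j * f j :=
    fun f h => (Finset.sum_subset hrangesub h).symm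
  have hsum1 : ∑ j ∈ Finset.range n, p j = 1 := by
    have h1 : ∑ j ∈ Finset.range n, p j = ∑ j ∈ Finset.range (M+1), p j := by
      symm; apply Finset.sum_subset hrangesub
      intro x _ hx2
      simp only [Finset.mem_range] at hx2
      exact hpgt x (by omega)
    rw [h1, Finset.sum_range_succ, hpM]
    have h2 : ∑ j ∈ Finset.range M, p j = ∑ i ∈ Finset.range M, (1/2 - a / (2 * c i)) :=
      Finset.sum_congr rfl fun i hi => hplt i (Finset.mem_range.1 hi)
    rw [h2, hsplit]; ring
  -- the mean cost T
  have hT : ∑ j ∈ Finset.range n, p j * c j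
      = S1/2 - (M:ℝ) * a / 2 + (1 - ((M:ℝ)/2 - a/2 * S2)) * b := by
    have h1 : ∑ j ∈ Finset.range n, p j * c j = ∑ j ∈ Finset.range (M+1), p j * c j := by
      symm; apply Finset.sum_subset hrangesub
      intro x _ hx2
      simp only [Finset.mem_range] at hx2
      rw [hpgt x (by omega), zero_mul]
    rw [h1, Finset.sum_range_succ, hpM]
    have h2 : ∑ j ∈ Finset.range M, p j * c j
        = ∑ j ∈ Finset.range M, (c j / 2 - a / 2) := by
      apply Finset.sum_congr rfl
      intro j hj
      have hjM := Finset.mem_range.1 hj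
      rw [hplt j hjM]
      have hcj : c j ≠ 0 := ne_of_gt (hci j (by omega)).1
      field_simp
    rw [h2, Finset.sum_sub_distrib, Finset.sum_const, card_range]
    simp only [nsmul_eq_mul]
    have h3 : ∑ j ∈ Finset.range M, c j / 2 = S1 / 2 := by
      rw [hS1, Finset.sum_div]
    rw [h3, ← hb]; ring
  -- V₂ in closed form
  have hV2 : V₂ = -((M:ℝ) - 2) * (a + b) / 2 + (1/2) * (S1 + b * a * S2) := by
    simp only [V₂]
    congr 1
    have h1 : ∑ i ∈ Finset.range M, (c i + b * a / c i)
        = S1 + b * a * S2 := by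
      rw [Finset.sum_add_distrib, ← hS1, hS2, Finset.mul_sum]
      congr 1
      apply Finset.sum_congr rfl
      intro i _; ring
    rw [← h1]
  -- key reduction for each pure strategy k
  have hkey : ∀ k, k < n → ∑ j ∈ (Finset.range n).erase k, p j * (c j + c k)
      = (∑ j ∈ Finset.range n, p j * c j) + c k - 2 * p k * c k := by
    intro k hk
    rw [Finset.sum_erase_eq_sub (Finset.mem_range.2 hk)]
    have h1 : ∑ j ∈ Finset.range n, p j * (c j + c k)
        = ∑ j ∈ Finset.range n, p j * c j + (∑ j ∈ Finset.range n, p j) * c k := by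
      rw [Finset.sum_mul, ← Finset.sum_add_distrib]
      exact Finset.sum_congr rfl fun j _ => by ring
    rw [h1, hsum1]; ring
  -- V₂ equals T + a
  have hVTa : V₂ = (∑ j ∈ Finset.range n, p j * c j) + a := by
    rw [hV2, hT]; ring
  -- equality for k < M or k = n-1
  have heq : ∀ k < n, (k < M ∨ k = n - 1) →
      ∑ j ∈ (Finset.range n).erase k, p j * (c j + c k) = V₂ := by
    intro k hk hcase
    rw [hkey k hk, hVTa]
    rcases hcase with h | h
    · rw [hplt k h]
      have hck : c k ≠ 0 := ne_of_gt (hci k (by omega)).1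
      field_simp
      ring
    · subst h
      rw [hpgt (n-1) hMn1, ← ha]
      ring
  refine ⟨hnn, hsum1, ?_, heq⟩
  -- inequality for all k
  intro k hk
  rcases lt_trichotomy k M with h | h | h
  · exact le_of_eq (heq k hk (Or.inl h)).symm
  · -- k = M : strict inequality from maximality
    rw [hkey k hk, hVTa, h, hpM]
    have hfail : ¬ (((M:ℝ) + 1) - 2) / a ≤ ∑ i ∈ Finset.range (M+1), 1 / c i := by
      intro hle
      have := hmax (M+1) (by omega) (by omega) (by push_cast; exact hle)
      omega
    push_neg at hfail
    rw [Finset.sum_range_succ, ← hS2, ← hb] at hfail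
    have hstrict : S2 + 1 / b < ((M:ℝ) - 1) / a := by
      have e : ((M:ℝ) + 1 - 2) = (M:ℝ) - 1 := by ring
      rwa [e] at hfail
    have hmul : a * (b * (S2 + 1 / b)) < a * (b * (((M:ℝ) - 1) / a)) :=
      mul_lt_mul_of_pos_left (mul_lt_mul_of_pos_left hstrict hbpos) hapos
    have e1 : a * (b * (S2 + 1 / b)) = a * b * S2 + a := by
      field_simp
    have e2 : a * (b * (((M:ℝ) - 1) / a)) = ((M:ℝ) - 1) * b := by
      field_simp
    rw [e1, e2] at hmul
    nlinarith
  · rcases eq_or_lt_of_le (show k ≤ n - 1 by omega) with h1 | h1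
    · exact le_of_eq (heq k hk (Or.inr h1)).symm
    · rw [hkey k hk, hVTa, hpgt k h]
      have : a ≤ c k := (hci k (by omega)).2
      linarith
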